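/- If G is a Young function satisfying the structural condition 1 < p⁻ ≤ t·g(t)/G(t) ≤ p⁺ < ∞ for all t > 0, then for every δ > 0 there exists a constant C_δ > 0 such that G(a + b) ≤ C_δ · G(a) + (1+δ)^{p⁺} · G(b) for all a, b ≥ 0. -/

import Mathlib

open Filter Set

theorem youngFunction_sum_estimate
    (g G : ℝ → ℝ) (pm pp : ℝ)
    (hg0 : g 0 = 0) (hgpos : ∀ t > (0:ℝ), 0 < g t)
    (hgmono : MonotoneOn g (Set.Ici 0))
    (hgrc : ∀ t ≥ (0:ℝ), ContinuousWithinAt g (Set.Ici t) t)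
    (hginf : Filter.Tendsto g Filter.atTop Filter.atTop)
    (hG : ∀ t, G t = ∫ τ in (0:ℝ)..t, g τ)
    (hpm : 1 < pm) (hpmpp : pm ≤ pp)
    (hstruct : ∀ t > (0:ℝ), pm ≤ t * g t / G t ∧ t * g t / G t ≤ pp) :
    ∀ δ > (0:ℝ), ∃ C > (0:ℝ), ∀ a b : ℝ, 0 ≤ a → 0 ≤ b →
      G (a + b) ≤ C * G a + (1 + δ) ^ pp * G b := by
  have hpp0 : (0:ℝ) < pp := lt_of_lt_of_le (lt_trans one_pos hpm) hpmpp
  have hgnn : ∀ x ≥ (0:ℝ), 0 ≤ g x := fun x hx => hg0 ▸ hgmono self_mem_Ici hx hx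
  have hint : ∀ a b : ℝ, 0 ≤ a → a ≤ b → IntervalIntegrable g MeasureTheory.volume a b := by
    intro a b ha hab
    apply MonotoneOn.intervalIntegrable
    apply hgmono.mono
    rw [uIcc_of_le hab]
    exact fun x hx => le_trans ha hx.1
  have hG0 : G 0 = 0 := by rw [hG]; simp
  have hGmono : ∀ s t : ℝ, 0 ≤ s → s ≤ t → G s ≤ G t := by
    intro s t hs hst
    have hadd := intervalIntegral.integral_add_adjacent_intervals
      (hint 0 s le_rfl hs) (hint s t hs hst)
    have hnn : 0 ≤ ∫ τ in s..t, g τ :=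
      intervalIntegral.integral_nonneg hst (fun x hx => hgnn x (le_trans hs hx.1))
    rw [hG s, hG t, ← hadd]
    linarith
  have hGnn : ∀ t ≥ (0:ℝ), 0 ≤ G t := fun t ht => hG0 ▸ hGmono 0 t le_rfl ht
  have hGpos : ∀ t > (0:ℝ), 0 < G t := by
    intro t ht
    rcases eq_or_lt_of_le (hGnn t ht.le) with h | h
    · exfalso
      have := (hstruct t ht).1
      rw [← h, div_zero] at this
      linarith
    · exact h
  have hkey : ∀ t > (0:ℝ), t * g t ≤ pp * G t := by
    intro t ht
    have := (hstruct t ht).2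
    rw [div_le_iff₀ (hGpos t ht)] at this
    linarith [this]
  have hGeq : G = fun x => ∫ τ in (0:ℝ)..x, g τ := funext hG
  -- continuity of G on [0, T]
  have hGcont : ∀ T : ℝ, 0 ≤ T → ContinuousOn G (Icc 0 T) := by
    intro T hT
    rw [hGeq]
    have : MeasureTheory.IntegrableOn g (uIcc 0 T) MeasureTheory.volume := by
      apply MonotoneOn.integrableOn_isCompact isCompact_uIcc
      apply hgmono.mono
      rw [uIcc_of_le hT]
      exact fun x hx => hx.1
    have := intervalIntegral.continuousOn_primitive_interval this
    rwa [uIcc_of_le hT] at this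
  -- right derivative of G
  have hGderiv : ∀ x ≥ (0:ℝ), HasDerivWithinAt G (g x) (Ici x) x := by
    intro x hx
    rw [hGeq]
    have hmeas : StronglyMeasurableAtFilter g (nhdsWithin x (Ioi x))
        MeasureTheory.volume := by
      refine ⟨Ici 0, mem_of_superset self_mem_nhdsWithin
        (fun y hy => le_trans hx (le_of_lt hy)), ?_⟩
      exact (aemeasurable_restrict_of_monotoneOn measurableSet_Ici hgmono).aestronglyMeasurable
    exact intervalIntegral.integral_hasDerivWithinAt_right (hint 0 x le_rfl hx) hmeas
      ((hgrc x hx).mono Ioi_subset_Ici_self)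
  -- antitonicity of G t / t ^ pp
  have hF : ∀ s t : ℝ, 0 < s → s ≤ t → G t / t ^ pp ≤ G s / s ^ pp := by
    intro s t hs hst
    set F : ℝ → ℝ := fun x => G x / x ^ pp with hFdef
    set F' : ℝ → ℝ := fun x =>
      (g x * x ^ pp - G x * (pp * x ^ (pp - 1))) / (x ^ pp) ^ 2 with hF'def
    have hfc : ContinuousOn F (Icc s t) := by
      apply ContinuousOn.div
      · exact (hGcont t (hs.le.trans hst)).mono
          (fun x hx => ⟨hs.le.trans hx.1, hx.2⟩)
      · intro x hx
        exact (Real.continuousAt_rpow_const x pp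
          (Or.inl (ne_of_gt (hs.trans_le hx.1)))).continuousWithinAt
      · intro x hx
        exact ne_of_gt (Real.rpow_pos_of_pos (hs.trans_le hx.1) pp)
    have hfd : ∀ x ∈ Ico s t, HasDerivWithinAt F (F' x) (Ici x) x := by
      intro x hx
      have hx0 : 0 < x := hs.trans_le hx.1
      exact (hGderiv x hx0.le).div
        ((Real.hasDerivAt_rpow_const (Or.inl hx0.ne')).hasDerivWithinAt)
        (ne_of_gt (Real.rpow_pos_of_pos hx0 pp))
    have hbound : ∀ x ∈ Ico s t, F' x ≤ 0 := by
      intro x hx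
      have hx0 : 0 < x := hs.trans_le hx.1
      apply div_nonpos_of_nonpos_of_nonneg
      · have h1 : x ^ pp = x ^ (pp - 1) * x := by
          rw [← Real.rpow_add_one hx0.ne' (pp - 1)]; ring_nf
        have h2 : (0:ℝ) ≤ x ^ (pp - 1) := (Real.rpow_pos_of_pos hx0 _).le
        have h3 : x * g x - pp * G x ≤ 0 := by linarith [hkey x hx0]
        calc g x * x ^ pp - G x * (pp * x ^ (pp - 1))
            = x ^ (pp - 1) * (x * g x - pp * G x) := by rw [h1]; ring
          _ ≤ 0 := mul_nonpos_of_nonneg_of_nonpos h2 h3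
      · positivity
    have := image_le_of_deriv_right_le_deriv_boundary (B := fun _ => F s) (B' := fun _ => 0)
      hfc hfd (le_refl (F s)) continuousOn_const (fun x _ => hasDerivWithinAt_const x _ (F s))
      (fun x hx => hbound x hx)
    exact this ⟨hst, le_rfl⟩
  -- scaling estimate
  have hscale : ∀ t > (0:ℝ), ∀ lam : ℝ, 1 ≤ lam → G (lam * t) ≤ lam ^ pp * G t := by
    intro t ht lam hlam
    have hlt : t ≤ lam * t := le_mul_of_one_le_left ht.le hlam
    have := hF t (lam * t) ht hlt
    have htpos : (0:ℝ) < t ^ pp := Real.rpow_pos_of_pos ht pp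
    have hltpos : (0:ℝ) < (lam * t) ^ pp :=
      Real.rpow_pos_of_pos (lt_of_lt_of_le ht hlt) pp
    rw [div_le_div_iff₀ hltpos htpos] at this
    have hmul : (lam * t) ^ pp = lam ^ pp * t ^ pp :=
      Real.mul_rpow (by linarith) ht.le
    rw [hmul] at this
    have := (mul_le_mul_iff_of_pos_right htpos).mp (by linarith : G (lam * t) * t ^ pp ≤ lam ^ pp * G t * t ^ pp)
    linarith
  -- conclusion
  intro δ hδ
  refine ⟨(1 + 1/δ) ^ pp, Real.rpow_pos_of_pos (by positivity) pp, ?_⟩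
  intro a b ha hb
  have h1δ : (0:ℝ) < (1 + δ) ^ pp := Real.rpow_pos_of_pos (by linarith) pp
  have hC : (0:ℝ) < (1 + 1/δ) ^ pp := Real.rpow_pos_of_pos (by positivity) pp
  rcases le_total a (δ * b) with hcase | hcase
  · rcases eq_or_lt_of_le hb with hb0 | hb0
    · have ha0 : a = 0 := le_antisymm (by rw [← hb0] at hcase; linarith) ha
      rw [ha0, ← hb0, add_zero, hG0]
      simp
    · have h1 : G (a + b) ≤ G ((1 + δ) * b) := by
        apply hGmono _ _ (by linarith) (by nlinarith)
      have h2 : G ((1 + δ) * b) ≤ (1 + δ) ^ pp * G b := hscale b hb0 (1 + δ) (by linarith)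
      have h3 : 0 ≤ (1 + 1/δ) ^ pp * G a := mul_nonneg hC.le (hGnn a ha)
      linarith
  · rcases eq_or_lt_of_le ha with ha0 | ha0
    · have hb0 : b = 0 := le_antisymm (by rw [← ha0] at hcase; nlinarith) hb
      rw [← ha0, hb0, add_zero, hG0]
      simp
    · have hba : b ≤ a / δ := (le_div_iff₀ hδ).mpr (by linarith)
      have h1 : G (a + b) ≤ G ((1 + 1/δ) * a) := by
        apply hGmono _ _ (by linarith) ?_
        have : (1 + 1/δ) * a = a + a/δ := by field_simp
        linarith [this]
      have h2 : G ((1 + 1/δ) * a) ≤ (1 + 1/δ) ^ pp * G a :=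
        hscale a ha0 (1 + 1/δ) (by nlinarith [one_div_pos.mpr hδ])
      have h3 : 0 ≤ (1 + δ) ^ pp * G b := mul_nonneg h1δ.le (hGnn b hb)
      linarith
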